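/- Let m > 0, n ≥ 2 an integer, and s₀ the unique positive solution of 1 + s₀² − m·s₀^{1−n} = 0. Let r₀ ∈ ℝ, a > s₀, and let λ be a maximal solution of the ordinary differential equation λ'(r) = √(1 + λ(r)² − m·λ(r)^{1−n}) with λ(r₀) = a. Then λ is defined on all of [r₀, ∞), λ is strictly increasing on [r₀, ∞), λ(r) → ∞ as r → ∞, and the limit lim_{r→∞} λ(r)·e^{−r} exists and is a positive real number. -/

import Mathlib

open Filter Set Real Topology

/-- Any maximal (forward) solution of the AdS-Schwarzschild ODE
`λ' = √(1 + λ² - m λ^(1-n))` with initial value `λ(r₀) = a > s₀` is defined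
on all of `[r₀, ∞)`, is strictly increasing there, tends to `∞`, and
`λ(r) e^(-r)` converges to a positive limit. -/
theorem stmt_1 (m : ℝ) (hm : 0 < m) (n : ℤ) (hn : 2 ≤ n)
    (s₀ : ℝ) (hs₀ : 0 < s₀) (hroot : 1 + s₀ ^ 2 - m * s₀ ^ (1 - n) = 0)
    (r₀ a : ℝ) (ha : s₀ < a)
    (lam : ℝ → ℝ) (J : Set ℝ)
    (hJmem : r₀ ∈ J) (hJsub : J ⊆ Set.Ici r₀) (hJconn : J.OrdConnected)
    (hinit : lam r₀ = a)
    (hsol : ∀ r ∈ J,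
      HasDerivWithinAt lam (Real.sqrt (1 + lam r ^ 2 - m * lam r ^ (1 - n))) J r)
    (hmax : ∀ (lam' : ℝ → ℝ) (J' : Set ℝ), J ⊆ J' → J' ⊆ Set.Ici r₀ →
      J'.OrdConnected → (∀ r ∈ J, lam' r = lam r) →
      (∀ r ∈ J',
        HasDerivWithinAt lam' (Real.sqrt (1 + lam' r ^ 2 - m * lam' r ^ (1 - n))) J' r) →
      J' = J) :
    J = Set.Ici r₀ ∧ StrictMonoOn lam (Set.Ici r₀) ∧
      Filter.Tendsto lam Filter.atTop Filter.atTop ∧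
      ∃ L : ℝ, 0 < L ∧
        Filter.Tendsto (fun r => lam r * Real.exp (-r)) Filter.atTop (nhds L) := by
  have ha0 : (0:ℝ) < a := hs₀.trans ha
  obtain ⟨k, hk⟩ : ∃ k : ℕ, (k : ℤ) = n - 1 := ⟨(n-1).toNat, Int.toNat_of_nonneg (by omega)⟩
  have hk0 : k ≠ 0 := by rintro rfl; simp at hk; omega
  set h : ℝ → ℝ := fun x => 1 + x ^ 2 - m * (x ^ k)⁻¹ with hhdef
  have hsqrt_eq : ∀ x : ℝ, 1 + x ^ 2 - m * x ^ (1 - n) = h x := by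
    intro x
    have h1 : (1 - n) = -(k:ℤ) := by omega
    rw [h1, zpow_neg, zpow_natCast]
  have hroot' : h s₀ = 0 := by rw [← hsqrt_eq]; exact hroot
  have hmono : ∀ x y : ℝ, 0 < x → x < y → h x < h y := by
    intro x y hx hxy
    have h1 : x ^ 2 < y ^ 2 := by nlinarith
    have hxk : 0 < x ^ k := pow_pos hx k
    have h2 : x ^ k < y ^ k := pow_lt_pow_left₀ hxy hx.le hk0
    have h3 : (y ^ k)⁻¹ < (x ^ k)⁻¹ := by
      apply inv_strictAnti₀ hxk h2
    have h4 : m * (y ^ k)⁻¹ < m * (x ^ k)⁻¹ := mul_lt_mul_of_pos_left h3 hm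
    simp only [hhdef]; linarith
  have hha : 0 < h a := by have := hmono s₀ a hs₀ ha; linarith [hroot']
  have hpos : ∀ x : ℝ, a ≤ x → 0 < h x := by
    intro x hx
    rcases eq_or_lt_of_le hx with rfl | hlt
    · exact hha
    · exact hha.trans (hmono a x ha0 hlt)
  have hsqrtpos : ∀ x : ℝ, a ≤ x → 0 < Real.sqrt (h x) := fun x hx => Real.sqrt_pos.2 (hpos x hx)
  -- the integrand φ
  set φ : ℝ → ℝ := fun s => (Real.sqrt (h (max s a)))⁻¹ with hφdef
  have hφpos : ∀ s, 0 < φ s := fun s => inv_pos.2 (hsqrtpos _ (le_max_right s a))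
  have hmaxne : ∀ s : ℝ, (max s a) ^ k ≠ 0 :=
    fun s => (pow_pos (lt_of_lt_of_le ha0 (le_max_right s a)) k).ne'
  have hφcont : Continuous φ := by
    have c1 : Continuous fun s : ℝ => max s a := continuous_id.max continuous_const
    have c2 : Continuous fun s : ℝ => h (max s a) := by
      simp only [hhdef]
      exact (continuous_const.add (c1.pow 2)).sub (continuous_const.mul ((c1.pow k).inv₀ hmaxne))
    exact (Real.continuous_sqrt.comp c2).inv₀ (fun s => (hsqrtpos _ (le_max_right s a)).ne')
  have hφlow : ∀ s : ℝ, s ≤ a → φ s = (Real.sqrt (h a))⁻¹ := by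
    intro s hs; simp only [hφdef, max_eq_right hs]
  have hφup : ∀ s : ℝ, a ≤ s → φ s = (Real.sqrt (h s))⁻¹ := by
    intro s hs; simp only [hφdef, max_eq_left hs]
  -- the function F
  set F : ℝ → ℝ := fun x => ∫ s in a..x, φ s with hFdef
  have hF : ∀ x, HasDerivAt F (φ x) x := fun x =>
    intervalIntegral.integral_hasDerivAt_right (hφcont.intervalIntegrable _ _)
      (hφcont.stronglyMeasurableAtFilter _ _) hφcont.continuousAt
  have hFmono : StrictMono F := strictMono_of_hasDerivAt_pos hF hφpos
  have hFa : F a = 0 := intervalIntegral.integral_same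
  have hFcont : Continuous F := by
    rw [continuous_iff_continuousAt]; exact fun x => (hF x).continuousAt
  -- F tends to -∞ at -∞
  have hFbot : Tendsto F atBot atBot := by
    have heq : ∀ x : ℝ, x ≤ a → F x = (x - a) * (Real.sqrt (h a))⁻¹ := by
      intro x hx
      have h1 : F x = ∫ s in a..x, (Real.sqrt (h a))⁻¹ := by
        apply intervalIntegral.integral_congr
        intro s hs
        rw [Set.uIcc_of_ge hx] at hs
        exact hφlow s hs.2
      rw [h1, intervalIntegral.integral_const, smul_eq_mul]
    have hlin : Tendsto (fun x : ℝ => (x - a) * (Real.sqrt (h a))⁻¹) atBot atBot := by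
      apply Tendsto.atBot_mul_const (inv_pos.2 (hsqrtpos a le_rfl))
      simpa [sub_eq_add_neg] using tendsto_atBot_add_const_right atBot (-a) tendsto_id
    exact hlin.congr' ((eventually_le_atBot a).mono fun x hx => (heq x hx).symm)
  -- F tends to ∞ at ∞
  have harsinh_top : Tendsto Real.arsinh atTop atTop :=
    tendsto_atTop_atTop_of_monotone Real.arsinh_strictMono.monotone
      (fun b => ⟨Real.sinh b, (Real.arsinh_sinh b).ge⟩)
  have hFtop : Tendsto F atTop atTop := by
    have hdm : MonotoneOn (fun x => F x - Real.arsinh x) (Ici a) := by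
      apply monotoneOn_of_hasDerivWithinAt_nonneg (convex_Ici a)
        (f' := fun x => φ x - (Real.sqrt (1 + x ^ 2))⁻¹)
      · exact (hFcont.sub Real.continuous_arsinh).continuousOn
      · intro x hx
        exact ((hF x).sub (Real.hasDerivAt_arsinh x)).hasDerivWithinAt
      · intro x hx
        rw [interior_Ici] at hx
        have hax : a ≤ x := le_of_lt hx
        have h1 : Real.sqrt (h x) ≤ Real.sqrt (1 + x ^ 2) := by
          apply Real.sqrt_le_sqrt
          have h2 : 0 < m * (x ^ k)⁻¹ := mul_pos hm (inv_pos.2 (pow_pos (ha0.trans_le hax) k))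
          simp only [hhdef]; linarith
        have h3 := inv_anti₀ (hsqrtpos x hax) h1
        rw [hφup x hax]
        linarith
    have hbd : ∀ x ∈ Ici a, Real.arsinh x + (F a - Real.arsinh a) ≤ F x := by
      intro x hx
      have h9 : F a - Real.arsinh a ≤ F x - Real.arsinh x := hdm (self_mem_Ici) hx hx
      linarith
    apply tendsto_atTop_mono' atTop
      (((eventually_ge_atTop a).mono hbd) :
        (fun x => Real.arsinh x + (F a - Real.arsinh a)) ≤ᶠ[atTop] F)
    exact tendsto_atTop_add_const_right atTop _ harsinh_top
  -- the inverse order isomorphism and the explicit solution g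
  have hFsurj : Function.Surjective F := hFcont.surjective hFtop hFbot
  set E := StrictMono.orderIsoOfSurjective F hFmono hFsurj with hEdef
  have hFE : ∀ t, F (E.symm t) = t := fun t =>
    StrictMono.orderIsoOfSurjective_self_symm_apply F hFmono hFsurj t
  have hEa : (E.symm 0 : ℝ) = a := by
    rw [← hFa]; exact StrictMono.orderIsoOfSurjective_symm_apply_self F hFmono hFsurj a
  set g : ℝ → ℝ := fun r => E.symm (r - r₀) with hgdef
  have hgcont : Continuous g := E.symm.continuous.comp (continuous_id.sub continuous_const)
  have hg_ge : ∀ r, r₀ ≤ r → a ≤ g r := by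
    intro r hr
    rw [← hEa]
    exact E.symm.monotone (by linarith : (0:ℝ) ≤ r - r₀)
  have hgd : ∀ r, HasDerivAt g (φ (g r))⁻¹ r := by
    intro r
    apply HasDerivAt.of_local_left_inverse hgcont.continuousAt
      ((hF (g r)).add_const r₀) (hφpos (g r)).ne'
    filter_upwards with y
    show F (E.symm (y - r₀)) + r₀ = y
    rw [hFE]; ring
  have hgd' : ∀ r, r₀ ≤ r → HasDerivAt g (Real.sqrt (h (g r))) r := by
    intro r hr
    have h1 := hgd r
    rwa [hφup _ (hg_ge r hr), inv_inv] at h1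
  -- facts about lam on J
  have hsol' : ∀ r ∈ J, HasDerivWithinAt lam (Real.sqrt (h (lam r))) J r := by
    intro r hr; have := hsol r hr; rwa [hsqrt_eq] at this
  have hlamcont : ContinuousOn lam J := fun r hr => (hsol' r hr).continuousWithinAt
  have hJconvex : Convex ℝ J := hJconn.convex
  have hlam_mono : MonotoneOn lam J :=
    monotoneOn_of_hasDerivWithinAt_nonneg hJconvex hlamcont
      (fun x hx => (hsol' x (interior_subset hx)).mono interior_subset)
      (fun x _ => Real.sqrt_nonneg _)
  have hlam_ge : ∀ r ∈ J, a ≤ lam r := by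
    intro r hr
    have := hlam_mono hJmem hr (hJsub hr)
    rwa [hinit] at this
  -- F ∘ lam - id is constant on J
  have hulam : ∀ t ∈ J, HasDerivWithinAt (fun t => F (lam t) - t) 0 J t := by
    intro t ht
    have h1 : HasDerivWithinAt (fun t => F (lam t)) (φ (lam t) * Real.sqrt (h (lam t))) J t :=
      (hF (lam t)).comp_hasDerivWithinAt t (hsol' t ht)
    have h2 : φ (lam t) * Real.sqrt (h (lam t)) = 1 := by
      rw [hφup _ (hlam_ge t ht)]
      exact inv_mul_cancel₀ (hsqrtpos _ (hlam_ge t ht)).ne'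
    have h3 := h1.sub (hasDerivWithinAt_id t J)
    rw [h2] at h3
    exact (by simpa using h3 : HasDerivWithinAt ((fun t => F (lam t)) - id) 0 J t)
  have hconst : ∀ t ∈ J, F (lam t) = t - r₀ := by
    intro t ht
    have key := Convex.norm_image_sub_le_of_norm_hasDerivWithin_le
      (C := 0) (f' := fun _ => (0:ℝ)) hulam (fun x _ => by simp) hJconvex hJmem ht
    rw [zero_mul] at key
    have h1 : F (lam t) - t - (F (lam r₀) - r₀) = 0 := by
      have := norm_nonneg ((fun t => F (lam t) - t) t - (fun t => F (lam t) - t) r₀)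
      have h2 : ‖F (lam t) - t - (F (lam r₀) - r₀)‖ = 0 := le_antisymm key (norm_nonneg _)
      simpa using h2
    rw [hinit, hFa] at h1
    linarith
  have hlam_eq_g : ∀ t ∈ J, lam t = g t := by
    intro t ht
    apply hFmono.injective
    rw [hconst t ht]
    exact (hFE (t - r₀)).symm
  -- maximality gives J = Ici r₀
  have hJ_eq : Set.Ici r₀ = J := by
    apply hmax g (Set.Ici r₀) hJsub Set.Subset.rfl Set.ordConnected_Ici
      (fun r hr => (hlam_eq_g r hr).symm)
    intro r hr
    rw [hsqrt_eq]
    exact (hgd' r hr).hasDerivWithinAt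
  have hlamg : ∀ t, r₀ ≤ t → lam t = g t := fun t ht => hlam_eq_g t (hJ_eq ▸ ht)
  -- g tends to ∞
  have hEtop : Tendsto (fun t => (E.symm t : ℝ)) atTop atTop :=
    tendsto_atTop_atTop_of_monotone (fun x y hxy => E.symm.monotone hxy)
      (fun b => ⟨E b, (E.symm_apply_apply b).ge⟩)
  have hgtop : Tendsto g atTop atTop := by
    apply hEtop.comp
    simpa [sub_eq_add_neg] using tendsto_atTop_add_const_right atTop (-r₀) tendsto_id
  refine ⟨hJ_eq.symm, ?_, ?_, ?_⟩
  · -- strict monotonicity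
    intro x hx y hy hxy
    rw [hlamg x hx, hlamg y hy]
    exact E.symm.strictMono (by simpa using sub_lt_sub_right hxy r₀)
  · -- tendsto atTop
    exact Filter.Tendsto.congr'
      (((eventually_ge_atTop r₀).mono fun r hr => (hlamg r hr).symm)) hgtop
  · -- the limit of lam r * exp (-r)
    set C : ℝ := 1 + m * (a ^ k)⁻¹ with hCdef
    have hapow : 0 < a ^ k := pow_pos ha0 k
    have hC : 0 < C := by positivity
    set d : ℝ := Real.sqrt (h a) with hddef
    have hd : 0 < d := hsqrtpos a le_rfl
    set C' : ℝ := C / d with hC'def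
    have hC'pos : 0 < C' := by positivity
    have hbound : ∀ u : ℝ, a ≤ u → |u⁻¹ - φ u| ≤ C' * (u ^ 2)⁻¹ := by
      intro u hu
      have hu0 : 0 < u := ha0.trans_le hu
      set s := Real.sqrt (h u) with hsdef
      have hs0 : 0 < s := hsqrtpos u hu
      have hs2 : s ^ 2 = h u := Real.sq_sqrt (hpos u hu).le
      have hds : d ≤ s := by
        rcases eq_or_lt_of_le hu with rfl | h'
        · exact le_rfl
        · exact Real.sqrt_le_sqrt (hmono a u ha0 h').le
      have hink : (u ^ k)⁻¹ ≤ (a ^ k)⁻¹ :=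
        inv_anti₀ hapow (pow_le_pow_left₀ ha0.le hu k)
      have habs : |h u - u ^ 2| ≤ C := by
        have h1 : 0 < m * (u ^ k)⁻¹ := mul_pos hm (inv_pos.2 (pow_pos hu0 k))
        have h2 : m * (u ^ k)⁻¹ ≤ m * (a ^ k)⁻¹ := mul_le_mul_of_nonneg_left hink hm.le
        rw [abs_le]
        constructor <;> simp only [hhdef, hCdef] <;> [linarith; linarith]
      have hsu : |s - u| * (s + u) = |h u - u ^ 2| := by
        rw [← abs_of_pos (show 0 < s + u by linarith), ← abs_mul]
        congr 1
        rw [← hs2]; ring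
      have h5 : |s - u| ≤ C / u := by
        rw [le_div_iff₀ hu0]
        calc |s - u| * u ≤ |s - u| * (s + u) :=
              mul_le_mul_of_nonneg_left (by linarith) (abs_nonneg _)
          _ = |h u - u ^ 2| := hsu
          _ ≤ C := habs
      have hfeq : u⁻¹ - φ u = (s - u) / (u * s) := by
        rw [hφup u hu, ← hsdef]
        field_simp
      rw [hfeq, abs_div, abs_of_pos (mul_pos hu0 hs0)]
      calc |s - u| / (u * s) ≤ (C / u) / (u * d) :=
            div_le_div₀ (by positivity) h5 (by positivity)
              (mul_le_mul_of_nonneg_left hds hu0.le)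
        _ = C' * (u ^ 2)⁻¹ := by
            rw [hC'def, div_div, show u * (u * d) = u ^ 2 * d by ring,
              div_mul_eq_div_div, div_right_comm, div_eq_mul_inv]
    -- ψ = log - F converges at ∞
    set ψ : ℝ → ℝ := fun u => Real.log u - F u with hψdef
    set B : ℝ → ℝ := fun u => ψ u - C' * u⁻¹ with hBdef
    set A : ℝ → ℝ := fun u => ψ u + C' * u⁻¹ with hAdef
    have hψd : ∀ u : ℝ, 0 < u → HasDerivAt ψ (u⁻¹ - φ u) u := fun u hu =>
      (Real.hasDerivAt_log hu.ne').sub (hF u)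
    have hinvd : ∀ u : ℝ, 0 < u → HasDerivAt (fun u : ℝ => C' * u⁻¹) (C' * (-(u ^ 2)⁻¹)) u :=
      fun u hu => (hasDerivAt_inv hu.ne').const_mul C'
    have hBmono : MonotoneOn B (Ici a) := by
      apply monotoneOn_of_hasDerivWithinAt_nonneg (convex_Ici a)
        (f' := fun u => (u⁻¹ - φ u) - C' * (-(u ^ 2)⁻¹))
      · intro x hx
        exact (((hψd x (ha0.trans_le hx)).sub (hinvd x (ha0.trans_le hx))).continuousAt).continuousWithinAt
      · intro x hx
        rw [interior_Ici] at hx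
        exact ((hψd x (ha0.trans hx)).sub (hinvd x (ha0.trans hx))).hasDerivWithinAt
      · intro x hx
        rw [interior_Ici] at hx
        have hb := abs_le.1 (hbound x hx.le)
        have hx2 : (0:ℝ) ≤ C' * (x ^ 2)⁻¹ := by positivity
        have := hb.1
        nlinarith [hb.1]
    have hAanti : AntitoneOn A (Ici a) := by
      apply antitoneOn_of_hasDerivWithinAt_nonpos (convex_Ici a)
        (f' := fun u => (u⁻¹ - φ u) + C' * (-(u ^ 2)⁻¹))
      · intro x hx
        exact (((hψd x (ha0.trans_le hx)).add (hinvd x (ha0.trans_le hx))).continuousAt).continuousWithinAt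
      · intro x hx
        rw [interior_Ici] at hx
        exact ((hψd x (ha0.trans hx)).add (hinvd x (ha0.trans hx))).hasDerivWithinAt
      · intro x hx
        rw [interior_Ici] at hx
        have hb := abs_le.1 (hbound x hx.le)
        nlinarith [hb.2]
    have hBleA : ∀ u ∈ Ici a, B u ≤ A a := by
      intro u hu
      have hu0 : 0 < u := ha0.trans_le hu
      have h1 : B u ≤ A u := by
        simp only [hBdef, hAdef]
        have : 0 ≤ C' * u⁻¹ := by positivity
        linarith
      exact h1.trans (hAanti self_mem_Ici hu hu)
    set Bt : ℝ → ℝ := fun u => B (max u a) with hBtdef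
    have hBtmono : Monotone Bt := fun x y hxy =>
      hBmono (le_max_right x a) (le_max_right y a) (max_le_max hxy le_rfl)
    have hBtbdd : BddAbove (Set.range Bt) := by
      refine ⟨A a, ?_⟩
      rintro _ ⟨u, rfl⟩
      exact hBleA _ (le_max_right u a)
    have hBt_tendsto : Tendsto Bt atTop (𝓝 (⨆ u, Bt u)) := tendsto_atTop_ciSup hBtmono hBtbdd
    set l : ℝ := ⨆ u, Bt u with hldef
    have hψ_tendsto : Tendsto ψ atTop (𝓝 l) := by
      have h1 : Tendsto (fun u => Bt u + C' * u⁻¹) atTop (𝓝 (l + C' * 0)) :=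
        hBt_tendsto.add (tendsto_inv_atTop_zero.const_mul C')
      rw [mul_zero, add_zero] at h1
      apply h1.congr'
      filter_upwards [eventually_ge_atTop a] with u hu
      simp only [hBtdef, hBdef, max_eq_left hu]
      ring
    refine ⟨Real.exp (l - r₀), Real.exp_pos _, ?_⟩
    have hcomp : Tendsto (fun r => Real.exp (ψ (g r) - r₀)) atTop (𝓝 (Real.exp (l - r₀))) := by
      have h1 : Tendsto (fun r => ψ (g r) - r₀) atTop (𝓝 (l - r₀)) :=
        (hψ_tendsto.comp hgtop).sub_const r₀
      exact (Real.continuous_exp.tendsto _).comp h1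
    apply hcomp.congr'
    filter_upwards [eventually_ge_atTop r₀] with r hr
    have hg0 : 0 < g r := ha0.trans_le (hg_ge r hr)
    have hFg : F (g r) = r - r₀ := hFE (r - r₀)
    have h2 : ψ (g r) = Real.log (g r) - (r - r₀) := by
      simp only [hψdef, hFg]
    rw [hlamg r hr, h2,
      show Real.log (g r) - (r - r₀) - r₀ = Real.log (g r) + (-r) by ring,
      Real.exp_add, Real.exp_log hg0]
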